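/- Let σ be a permutation of Fin n with cycle type (j_i(σ))_{i=1}^∞, where j_i(σ) is the number of cycles of length i in the disjoint cycle decomposition of σ (counting fixed points as 1-cycles). Then the number of binary operations ∗ on Fin n for which σ is a magma automorphism equals ∏_{r,s=1}^n (∑_{d ∣ lcm(r,s)} d · j_d(σ))^{gcd(r,s) · j_r(σ) · j_s(σ)}. -/

import Mathlib

/-- `cycleCount σ i` is the number of `i`-cycles in the disjoint cycle decomposition of the
permutation `σ` (fixed points counted as `1`-cycles): the points lying on an `i`-cycle are
precisely those of minimal period `i`, and each `i`-cycle contains `i` of them. -/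
noncomputable def cycleCount {X : Type*} (σ : Equiv.Perm X) (i : ℕ) : ℕ :=
  Nat.card {a : X // Function.minimalPeriod (⇑σ) a = i} / i

open Equiv Function MulAction Subgroup Finset

variable {X Y I : Type*}

/-- invariance under a permutation extends to integer powers -/
lemma invar_zpow (τ : Equiv.Perm X) (u : X → I) (hu : ∀ x, u (τ x) = u x)
    (k : ℤ) (x : X) : u ((τ ^ k) x) = u x := by
  have hn : ∀ (k : ℕ) (x : X), u ((τ ^ k) x) = u x := by
    intro k
    induction k with
    | zero => simp
    | succ k ih =>
      intro x
      rw [pow_succ, Equiv.Perm.mul_apply, ih, hu]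
  cases k with
  | ofNat k => simpa using hn k x
  | negSucc k =>
    have := hn (k + 1) ((τ ^ (Int.negSucc k)) x)
    rw [← Equiv.Perm.mul_apply, ← zpow_natCast, ← zpow_add,
      show ((k + 1 : ℕ) : ℤ) + Int.negSucc k = 0 by rw [Int.negSucc_eq]; push_cast; ring,
      zpow_zero] at this
    exact this.symm

/-- every point of a permutation of a finite type is periodic -/
lemma perm_isPeriodic [Finite X] (τ : Equiv.Perm X) (x : X) :
    x ∈ Function.periodicPts ⇑τ := by
  refine ⟨orderOf τ, orderOf_pos τ, ?_⟩
  show (⇑τ)^[orderOf τ] x = x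
  rw [Equiv.Perm.iterate_eq_pow, pow_orderOf_eq_one]
  rfl

lemma zpow_apply_eq_of_dvd (ρ : Equiv.Perm Y) {y : Y} {m : ℕ} (hy : (ρ ^ m) y = y)
    {i j : ℤ} (h : (m : ℤ) ∣ i - j) : (ρ ^ i) y = (ρ ^ j) y := by
  obtain ⟨t, ht⟩ := h
  have hmem : ρ ^ m ∈ MulAction.stabilizer (Equiv.Perm Y) y :=
    MulAction.mem_stabilizer_iff.mpr hy
  have h2 : ((ρ ^ m) ^ t) y = y :=
    MulAction.mem_stabilizer_iff.mp ((MulAction.stabilizer (Equiv.Perm Y) y).zpow_mem hmem t)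
  have key : (ρ ^ (i - j)) y = y := by
    rw [ht, zpow_mul, zpow_natCast]; exact h2
  conv_lhs => rw [show i = j + (i - j) by ring]
  rw [zpow_add, Equiv.Perm.mul_apply, key]

lemma card_orbit_fiber [Fintype X] (τ : Equiv.Perm X)
    (q : MulAction.orbitRel.Quotient (Subgroup.zpowers τ) X) :
    Nat.card {x : X //
        (Quotient.mk'' x : MulAction.orbitRel.Quotient (Subgroup.zpowers τ) X) = q}
      = Function.minimalPeriod ⇑τ q.out := by
  have e1 : {x : X //
      (Quotient.mk'' x : MulAction.orbitRel.Quotient (Subgroup.zpowers τ) X) = q} ≃ q.orbit :=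
    Equiv.subtypeEquivRight fun x => MulAction.orbitRel.Quotient.mem_orbit.symm
  have e2 : (q.orbit : Set X) ≃ MulAction.orbit (Subgroup.zpowers τ) q.out :=
    Equiv.setCongr (MulAction.orbitRel.Quotient.orbit_eq_orbit_out q Quotient.out_eq')
  have e3 := MulAction.orbitZPowersEquiv τ q.out
  rw [Nat.card_congr (e1.trans (e2.trans e3)), Nat.card_zmod]
  rfl

lemma exists_zpow_out_eq (τ : Equiv.Perm X) (x : X)
    (q : MulAction.orbitRel.Quotient (Subgroup.zpowers τ) X)
    (h : (Quotient.mk'' x : MulAction.orbitRel.Quotient (Subgroup.zpowers τ) X) = q) :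
    ∃ k : ℤ, (τ ^ k) q.out = x := by
  have hx : x ∈ q.orbit := MulAction.orbitRel.Quotient.mem_orbit.mpr h
  rw [MulAction.orbitRel.Quotient.orbit_eq_orbit_out q Quotient.out_eq'] at hx
  obtain ⟨g, hg⟩ := hx
  obtain ⟨k, hk⟩ := Subgroup.mem_zpowers_iff.mp g.2
  exact ⟨k, by rw [hk]; exact hg⟩

lemma card_invariant_fiber [Fintype X] [DecidableEq I] (τ : Equiv.Perm X)
    [Fintype (MulAction.orbitRel.Quotient (Subgroup.zpowers τ) X)]
    (u : X → I) (hu : ∀ x, u (τ x) = u x) (v : I) :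
    Nat.card {x : X // u x = v} =
      ∑ q : MulAction.orbitRel.Quotient (Subgroup.zpowers τ) X,
        if u q.out = v then Function.minimalPeriod ⇑τ q.out else 0 := by
  classical
  have huq : ∀ (x : X) (q : MulAction.orbitRel.Quotient (Subgroup.zpowers τ) X),
      (Quotient.mk'' x : MulAction.orbitRel.Quotient (Subgroup.zpowers τ) X) = q →
        u x = u q.out := by
    intro x q h
    obtain ⟨k, hk⟩ := exists_zpow_out_eq τ x q h
    rw [← hk, invar_zpow τ u hu]
  rw [Nat.card_eq_fintype_card, Fintype.card_subtype,
    Finset.card_eq_sum_card_fiberwise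
      (f := fun x => (Quotient.mk'' x : MulAction.orbitRel.Quotient (Subgroup.zpowers τ) X))
      (t := Finset.univ) (fun x _ => Finset.mem_univ _)]
  refine Finset.sum_congr rfl fun q _ => ?_
  rw [Finset.filter_filter]
  by_cases h : u q.out = v
  · rw [if_pos h, ← card_orbit_fiber τ q, Nat.card_eq_fintype_card, Fintype.card_subtype]
    congr 1
    apply Finset.filter_congr
    intro x _
    exact ⟨fun h' => h'.2, fun h' => ⟨(huq x q h').trans h, h'⟩⟩
  · rw [if_neg h, Finset.card_eq_zero, Finset.filter_eq_empty_iff]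
    intro x _
    rintro ⟨h1, h2⟩
    exact h ((huq x q h2).symm.trans h1)

lemma perm_zpow_apply_eq_iff_dvd [Fintype X] (τ : Equiv.Perm X) (x : X) (k : ℤ) :
    (τ ^ k) x = x ↔ (Function.minimalPeriod ⇑τ x : ℤ) ∣ k := by
  have := MulAction.zpow_smul_eq_iff_minimalPeriod_dvd (a := τ) (b := x) (n := k)
  exact this

lemma card_equivariant [Fintype X] [Fintype Y] (τ : Equiv.Perm X) (ρ : Equiv.Perm Y)
    [Fintype (MulAction.orbitRel.Quotient (Subgroup.zpowers τ) X)] :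
    Nat.card {g : X → Y // ∀ x, ρ (g x) = g (τ x)} =
      ∏ q : MulAction.orbitRel.Quotient (Subgroup.zpowers τ) X,
        Nat.card {y : Y // (ρ ^ Function.minimalPeriod ⇑τ q.out) y = y} := by
  classical
  set Ω := MulAction.orbitRel.Quotient (Subgroup.zpowers τ) X with hΩ
  set m : Ω → ℕ := fun q => Function.minimalPeriod ⇑τ q.out with hm
  have hz : ∀ (g : {g : X → Y // ∀ x, ρ (g x) = g (τ x)}) (k : ℤ) (x : X),
      (ρ ^ k) (g.1 x) = g.1 ((τ ^ k) x) := by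
    intro g k
    have hn : ∀ (k : ℕ) (x : X), (ρ ^ k) (g.1 x) = g.1 ((τ ^ k) x) := by
      intro k
      induction k with
      | zero => simp
      | succ k ih =>
        intro x
        rw [pow_succ, pow_succ, Equiv.Perm.mul_apply, Equiv.Perm.mul_apply, g.2, ih]
    cases k with
    | ofNat k => intro x; simpa using hn k x
    | negSucc k =>
      intro x
      have h2 : (τ ^ (k + 1) : Equiv.Perm X) ((τ ^ (Int.negSucc k)) x) = x := by
        rw [← Equiv.Perm.mul_apply, ← zpow_natCast, ← zpow_add,
          show ((k + 1 : ℕ) : ℤ) + Int.negSucc k = 0 by rw [Int.negSucc_eq]; push_cast; ring,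
          zpow_zero, Equiv.Perm.one_apply]
      have h1 := hn (k + 1) ((τ ^ (Int.negSucc k)) x)
      rw [h2] at h1
      rw [zpow_negSucc, ← h1, Equiv.Perm.inv_def, Equiv.symm_apply_apply]
  have spec : ∀ x : X, ∃ k : ℤ, (τ ^ k) ((Quotient.mk'' x : Ω)).out = x :=
    fun x => exists_zpow_out_eq τ x _ rfl
  choose key hkey using spec
  set F : {g : X → Y // ∀ x, ρ (g x) = g (τ x)} → (∀ q : Ω, {y : Y // (ρ ^ m q) y = y}) :=
    fun g q => ⟨g.1 q.out, by
      have h1 : (τ ^ (m q)) q.out = q.out := by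
        have h0 := Function.isPeriodicPt_minimalPeriod ⇑τ q.out
        rwa [Function.IsPeriodicPt, Function.IsFixedPt, Equiv.Perm.iterate_eq_pow] at h0
      have h2 := hz g (m q : ℤ) q.out
      simp only [zpow_natCast] at h2
      rw [h2, h1]⟩ with hF
  have hFbij : Function.Bijective F := by
    constructor
    · intro g g' hgg
      apply Subtype.ext; funext x
      have h1 : g.1 (Quotient.mk'' x : Ω).out = g'.1 (Quotient.mk'' x : Ω).out :=
        congrArg (fun h => (h (Quotient.mk'' x : Ω)).1) hgg
      calc g.1 x = g.1 ((τ ^ key x) (Quotient.mk'' x : Ω).out) := by rw [hkey]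
        _ = (ρ ^ key x) (g.1 (Quotient.mk'' x : Ω).out) := (hz g _ _).symm
        _ = (ρ ^ key x) (g'.1 (Quotient.mk'' x : Ω).out) := by rw [h1]
        _ = g'.1 ((τ ^ key x) (Quotient.mk'' x : Ω).out) := hz g' _ _
        _ = g'.1 x := by rw [hkey]
    · intro h
      have hfix : ∀ (q : Ω) (t : ℤ), (m q : ℤ) ∣ t → (ρ ^ t) (h q).1 = (h q).1 := by
        intro q t ht
        have h0 := zpow_apply_eq_of_dvd ρ (h q).2 (i := t) (j := 0) (by simpa using ht)
        simpa using h0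
      refine ⟨⟨fun x => (ρ ^ key x) (h (Quotient.mk'' x : Ω)).1, ?_⟩, ?_⟩
      · intro x
        have hq : (Quotient.mk'' (τ x) : Ω) = (Quotient.mk'' x : Ω) := by
          apply Quotient.sound'
          exact ⟨⟨τ, Subgroup.mem_zpowers τ⟩, rfl⟩
        have hkey2 : (τ ^ key (τ x)) ((Quotient.mk'' x : Ω)).out = τ x := by
          have := hkey (τ x); rwa [hq] at this
        have e0 : (τ ^ (1 + key x)) ((Quotient.mk'' x : Ω)).out =
            (τ ^ key (τ x)) ((Quotient.mk'' x : Ω)).out := by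
          rw [zpow_one_add, Equiv.Perm.mul_apply, hkey x, hkey2]
        have e1 : (τ ^ ((1 + key x) - key (τ x))) ((Quotient.mk'' x : Ω)).out =
            ((Quotient.mk'' x : Ω)).out := by
          rw [show (1 + key x) - key (τ x) = -(key (τ x)) + (1 + key x) by ring,
            zpow_add, Equiv.Perm.mul_apply, e0, ← Equiv.Perm.mul_apply, ← zpow_add]
          simp
        have hdvd : (m (Quotient.mk'' x : Ω) : ℤ) ∣ (1 + key x) - key (τ x) :=
          (perm_zpow_apply_eq_iff_dvd τ _ _).mp e1
        calc ρ ((ρ ^ key x) (h (Quotient.mk'' x : Ω)).1)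
            = (ρ ^ (1 + key x)) (h (Quotient.mk'' x : Ω)).1 := by
              rw [zpow_one_add, Equiv.Perm.mul_apply]
          _ = (ρ ^ key (τ x)) (h (Quotient.mk'' x : Ω)).1 :=
              zpow_apply_eq_of_dvd ρ (h (Quotient.mk'' x : Ω)).2 hdvd
          _ = (ρ ^ key (τ x)) (h (Quotient.mk'' (τ x) : Ω)).1 := by rw [hq]
      · funext q
        apply Subtype.ext
        show (ρ ^ key q.out) (h (Quotient.mk'' q.out : Ω)).1 = (h q).1
        have hq2 : (Quotient.mk'' q.out : Ω) = q := Quotient.out_eq' q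
        rw [hq2]
        apply hfix
        rw [← perm_zpow_apply_eq_iff_dvd τ q.out (key q.out)]
        have := hkey q.out
        rwa [hq2] at this
  rw [Nat.card_congr (Equiv.ofBijective F hFbij), Nat.card_pi]
  exact Finset.prod_congr (by congr!) fun q _ => rfl

lemma minimalPeriod_invariant [Fintype X] (σ : Equiv.Perm X) (x : X) :
    Function.minimalPeriod ⇑σ (σ x) = Function.minimalPeriod ⇑σ x :=
  Function.minimalPeriod_apply (perm_isPeriodic σ x)

/-- number of points of minimal period `d` equals `d` times number of orbits of size `d` -/
lemma card_minimalPeriod_fiber [Fintype X] (σ : Equiv.Perm X)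
    [Fintype (MulAction.orbitRel.Quotient (Subgroup.zpowers σ) X)] (d : ℕ) :
    Nat.card {a : X // Function.minimalPeriod ⇑σ a = d} =
      d * Nat.card {q : MulAction.orbitRel.Quotient (Subgroup.zpowers σ) X //
        Function.minimalPeriod ⇑σ q.out = d} := by
  classical
  rw [card_invariant_fiber σ (fun a => Function.minimalPeriod ⇑σ a)
    (minimalPeriod_invariant σ) d]
  rw [Nat.card_eq_fintype_card, Fintype.card_subtype]
  calc ∑ q : MulAction.orbitRel.Quotient (Subgroup.zpowers σ) X,
        ite (Function.minimalPeriod ⇑σ q.out = d) (Function.minimalPeriod ⇑σ q.out) 0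
      = ∑ q : MulAction.orbitRel.Quotient (Subgroup.zpowers σ) X,
        ite (Function.minimalPeriod ⇑σ q.out = d) d 0 := by
        refine Finset.sum_congr rfl fun q _ => ?_
        split_ifs with h
        · exact h
        · rfl
    _ = ∑ _q ∈ Finset.filter (fun q : MulAction.orbitRel.Quotient (Subgroup.zpowers σ) X =>
          Function.minimalPeriod ⇑σ q.out = d) Finset.univ, d := by
        rw [Finset.sum_filter]
    _ = _ := by rw [Finset.sum_const, smul_eq_mul, mul_comm]

lemma cycleCount_eq_card_orbits {n : ℕ} (σ : Equiv.Perm (Fin n))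
    [Fintype (MulAction.orbitRel.Quotient (Subgroup.zpowers σ) (Fin n))] {d : ℕ} (hd : d ≠ 0) :
    Nat.card {a : Fin n // Function.minimalPeriod (⇑σ) a = d} / d =
      Nat.card {q : MulAction.orbitRel.Quotient (Subgroup.zpowers σ) (Fin n) //
        Function.minimalPeriod ⇑σ q.out = d} := by
  rw [card_minimalPeriod_fiber, Nat.mul_div_cancel_left _ (Nat.pos_of_ne_zero hd)]

/-- number of fixed points of `σ ^ m` -/
lemma card_fixed_pow [Fintype X] (σ : Equiv.Perm X)
    [Fintype (MulAction.orbitRel.Quotient (Subgroup.zpowers σ) X)] {m : ℕ} (hm : m ≠ 0) :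
    Nat.card {y : X // (σ ^ m) y = y} =
      ∑ d ∈ m.divisors, d * Nat.card {q : MulAction.orbitRel.Quotient (Subgroup.zpowers σ) X //
        Function.minimalPeriod ⇑σ q.out = d} := by
  classical
  have hcond : ∀ y : X, (σ ^ m) y = y ↔ Function.minimalPeriod ⇑σ y ∣ m := by
    intro y
    rw [← Function.isPeriodicPt_iff_minimalPeriod_dvd]
    show _ ↔ (⇑σ)^[m] y = y
    rw [Equiv.Perm.iterate_eq_pow]
  rw [Nat.card_congr (Equiv.subtypeEquivRight hcond), Nat.card_eq_fintype_card,
    Fintype.card_subtype,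
    Finset.card_eq_sum_card_fiberwise (f := fun y => Function.minimalPeriod ⇑σ y)
      (t := m.divisors)
      (fun y hy => Nat.mem_divisors.mpr ⟨(Finset.mem_filter.mp hy).2, hm⟩)]
  refine Finset.sum_congr rfl fun d hd => ?_
  rw [Finset.filter_filter, ← card_minimalPeriod_fiber σ d, Nat.card_eq_fintype_card,
    Fintype.card_subtype]
  congr 1
  apply Finset.filter_congr
  intro y _
  exact ⟨fun h => h.2, fun h => ⟨by simp only []; rw [h]; exact (Nat.mem_divisors.mp hd).1, h⟩⟩

lemma minimalPeriod_le_card [Fintype X] (σ : Equiv.Perm X) (a : X) :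
    Function.minimalPeriod ⇑σ a ≤ Fintype.card X := by
  have h1 : Nat.card (MulAction.orbit (Subgroup.zpowers σ) a)
      = Function.minimalPeriod ⇑σ a := by
    rw [Nat.card_congr (MulAction.orbitZPowersEquiv σ a), Nat.card_zmod]; rfl
  rw [← h1, ← Nat.card_eq_fintype_card]
  exact Nat.card_le_card_of_injective _ Subtype.val_injective

lemma minimalPeriod_pos [Fintype X] (σ : Equiv.Perm X) (a : X) :
    0 < Function.minimalPeriod ⇑σ a :=
  Function.minimalPeriod_pos_of_mem_periodicPts (perm_isPeriodic σ a)

/-- The number of binary operations on `Fin n` admitting a given permutation `σ` as a magma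
automorphism equals
`∏_{r,s=1}^n (∑_{d ∣ lcm(r,s)} d jᵢ(σ))^{gcd(r,s) jᵣ(σ) jₛ(σ)}`,
where `(jᵢ(σ))` is the cycle type of `σ`. -/
theorem card_ops_with_automorphism (n : ℕ) (σ : Equiv.Perm (Fin n)) :
    Nat.card {f : Fin n → Fin n → Fin n // ∀ a a' : Fin n, σ (f a a') = f (σ a) (σ a')} =
      ∏ r ∈ Finset.Icc 1 n, ∏ s ∈ Finset.Icc 1 n,
        (∑ d ∈ (Nat.lcm r s).divisors, d * cycleCount σ d) ^
          (Nat.gcd r s * cycleCount σ r * cycleCount σ s) := by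
  classical
  haveI : Fintype (MulAction.orbitRel.Quotient (Subgroup.zpowers σ) (Fin n)) :=
    Fintype.ofFinite _
  set τ : Equiv.Perm (Fin n × Fin n) := Equiv.prodCongr σ σ with hτ
  haveI : Fintype (MulAction.orbitRel.Quotient (Subgroup.zpowers τ) (Fin n × Fin n)) :=
    Fintype.ofFinite _
  set J : ℕ → ℕ := fun d => Nat.card {q : MulAction.orbitRel.Quotient (Subgroup.zpowers σ)
    (Fin n) // Function.minimalPeriod ⇑σ q.out = d} with hJ
  have hcc : ∀ d : ℕ, d ≠ 0 → cycleCount σ d = J d := by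
    intro d hd
    rw [cycleCount, hJ]
    exact cycleCount_eq_card_orbits σ hd
  -- step 1 : curry
  have e1 : {f : Fin n → Fin n → Fin n // ∀ a a' : Fin n, σ (f a a') = f (σ a) (σ a')} ≃
      {g : Fin n × Fin n → Fin n // ∀ p, σ (g p) = g (τ p)} := by
    refine Equiv.subtypeEquiv (Equiv.curry (Fin n) (Fin n) (Fin n)).symm ?_
    intro f
    constructor
    · intro h p; exact h p.1 p.2
    · intro h a a'; exact h (a, a')
  rw [Nat.card_congr e1, card_equivariant τ σ]
  -- minimal periods on pairs
  have hcoe : ⇑τ = Prod.map ⇑σ ⇑σ := rfl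
  have hτm : ∀ p : Fin n × Fin n, Function.minimalPeriod ⇑τ p =
      Nat.lcm (Function.minimalPeriod ⇑σ p.1) (Function.minimalPeriod ⇑σ p.2) := by
    intro p
    rw [hcoe, Function.minimalPeriod_prodMap]
  set ψ : Fin n × Fin n → ℕ × ℕ :=
    fun p => (Function.minimalPeriod ⇑σ p.1, Function.minimalPeriod ⇑σ p.2) with hψ
  have hψinv : ∀ p, ψ (τ p) = ψ p := by
    intro p
    show (Function.minimalPeriod ⇑σ (σ p.1), Function.minimalPeriod ⇑σ (σ p.2)) = _
    rw [minimalPeriod_invariant, minimalPeriod_invariant]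
  have hmem : ∀ q : MulAction.orbitRel.Quotient (Subgroup.zpowers τ) (Fin n × Fin n),
      ψ q.out ∈ Finset.Icc 1 n ×ˢ Finset.Icc 1 n := by
    intro q
    rw [Finset.mem_product, Finset.mem_Icc, Finset.mem_Icc]
    refine ⟨⟨minimalPeriod_pos σ _, ?_⟩, ⟨minimalPeriod_pos σ _, ?_⟩⟩
    · simpa using minimalPeriod_le_card σ q.out.1
    · simpa using minimalPeriod_le_card σ q.out.2
  rw [← Finset.prod_fiberwise_of_maps_to (fun q _ => hmem q)
    (fun q => Nat.card {y : Fin n // (σ ^ Function.minimalPeriod ⇑τ q.out) y = y}),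
    Finset.prod_product]
  refine Finset.prod_congr rfl fun r hr => Finset.prod_congr rfl fun s hs => ?_
  obtain ⟨hr1, hrn⟩ := Finset.mem_Icc.mp hr
  obtain ⟨hs1, hsn⟩ := Finset.mem_Icc.mp hs
  have hr0 : r ≠ 0 := by omega
  have hs0 : s ≠ 0 := by omega
  have hlcm0 : Nat.lcm r s ≠ 0 := Nat.lcm_ne_zero hr0 hs0
  -- inner product is a constant power
  have hinner : ∀ q ∈ Finset.filter
      (fun q : MulAction.orbitRel.Quotient (Subgroup.zpowers τ) (Fin n × Fin n) =>
        ψ q.out = (r, s)) Finset.univ,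
      Nat.card {y : Fin n // (σ ^ Function.minimalPeriod ⇑τ q.out) y = y} =
        ∑ d ∈ (Nat.lcm r s).divisors, d * cycleCount σ d := by
    intro q hq
    have hq' : ψ q.out = (r, s) := (Finset.mem_filter.mp hq).2
    have h1 : Function.minimalPeriod ⇑σ q.out.1 = r := congrArg Prod.fst hq'
    have h2 : Function.minimalPeriod ⇑σ q.out.2 = s := congrArg Prod.snd hq'
    rw [hτm, h1, h2, card_fixed_pow σ hlcm0]
    refine Finset.sum_congr rfl fun d hd => ?_
    rw [hcc d (Nat.pos_of_mem_divisors hd).ne']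
  rw [Finset.prod_congr rfl hinner, Finset.prod_const]
  congr 1
  -- count the fibers
  have hA := card_invariant_fiber τ ψ hψinv (r, s)
  have hB : (∑ q : MulAction.orbitRel.Quotient (Subgroup.zpowers τ) (Fin n × Fin n),
      if ψ q.out = (r, s) then Function.minimalPeriod ⇑τ q.out else 0) =
      Nat.lcm r s * (Finset.filter
        (fun q : MulAction.orbitRel.Quotient (Subgroup.zpowers τ) (Fin n × Fin n) =>
          ψ q.out = (r, s)) Finset.univ).card := by
    calc (∑ q : MulAction.orbitRel.Quotient (Subgroup.zpowers τ) (Fin n × Fin n),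
        if ψ q.out = (r, s) then Function.minimalPeriod ⇑τ q.out else 0)
        = ∑ q : MulAction.orbitRel.Quotient (Subgroup.zpowers τ) (Fin n × Fin n),
          if ψ q.out = (r, s) then Nat.lcm r s else 0 := by
          refine Finset.sum_congr rfl fun q _ => ?_
          split_ifs with h
          · have h1 : Function.minimalPeriod ⇑σ (Quotient.out q).1 = r := congrArg Prod.fst h
            have h2 : Function.minimalPeriod ⇑σ (Quotient.out q).2 = s := congrArg Prod.snd h
            rw [hτm, h1, h2]
          · rfl
      _ = ∑ _q ∈ Finset.filter
          (fun q : MulAction.orbitRel.Quotient (Subgroup.zpowers τ) (Fin n × Fin n) =>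
            ψ q.out = (r, s)) Finset.univ, Nat.lcm r s := by rw [Finset.sum_filter]
      _ = _ := by rw [Finset.sum_const, smul_eq_mul, mul_comm]
  have hC : Nat.card {p : Fin n × Fin n // ψ p = (r, s)} = (r * J r) * (s * J s) := by
    have e2 : {p : Fin n × Fin n // ψ p = (r, s)} ≃
        {p : Fin n × Fin n // Function.minimalPeriod ⇑σ p.1 = r ∧
          Function.minimalPeriod ⇑σ p.2 = s} :=
      Equiv.subtypeEquivRight fun p => by rw [hψ]; exact Prod.mk.injEq _ _ _ _ ▸ Iff.rfl
    rw [Nat.card_congr (e2.trans (Equiv.subtypeProdEquivProd (p := fun a => Function.minimalPeriod ⇑σ a = r) (q := fun b => Function.minimalPeriod ⇑σ b = s))), Nat.card_prod,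
      card_minimalPeriod_fiber σ r, card_minimalPeriod_fiber σ s, hJ, mul_comm r _, mul_comm s _]
  rw [hA, hB] at hC
  have hgoal : Nat.lcm r s * (Finset.filter
      (fun q : MulAction.orbitRel.Quotient (Subgroup.zpowers τ) (Fin n × Fin n) =>
        ψ q.out = (r, s)) Finset.univ).card =
      Nat.lcm r s * (Nat.gcd r s * cycleCount σ r * cycleCount σ s) := by
    rw [hC, hcc r hr0, hcc s hs0]
    have := Nat.gcd_mul_lcm r s
    calc r * J r * (s * J s) = (r * s) * (J r * J s) := by ring
      _ = (Nat.gcd r s * Nat.lcm r s) * (J r * J s) := by rw [Nat.gcd_mul_lcm]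
      _ = Nat.lcm r s * (Nat.gcd r s * J r * J s) := by ring
  exact Nat.eq_of_mul_eq_mul_left (Nat.pos_of_ne_zero hlcm0) hgoal
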